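/- Let μ be a probability measure on ℝ with compact support and let ᾱ ∈ (0,1). Define p(x) = ∫ gauss(√ᾱ·y, 1−ᾱ, x) dμ(y). Then for every x ∈ ℝ: p(x) > 0, p is differentiable at x, and p'(x)/p(x) = −x/(1−ᾱ) + (√ᾱ/(1−ᾱ)) · (∫ y · gauss(√ᾱ·y, 1−ᾱ, x) dμ(y)) / p(x). -/

import Mathlib

open MeasureTheory

/-- Density at `x` of the one-dimensional normal distribution with mean `m`
and variance `v`: `gauss(m, v, x) = (2πv)^(−1/2) · exp(−(x − m)²/(2v))`. -/
noncomputable def gauss (m v x : ℝ) : ℝ :=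
  (Real.sqrt (2 * Real.pi * v))⁻¹ * Real.exp (-(x - m) ^ 2 / (2 * v))

/-- The smoothed density `p(x) = ∫ gauss(√ᾱ·y, 1−ᾱ, x) dμ(y)`. -/
noncomputable def smoothedDensity (μ : Measure ℝ) (α : ℝ) (x : ℝ) : ℝ :=
  ∫ y, gauss (Real.sqrt α * y) (1 - α) x ∂μ

lemma gauss_pos (m v x : ℝ) (hv : 0 < v) : 0 < gauss m v x := by
  have : 0 < Real.sqrt (2 * Real.pi * v) := Real.sqrt_pos.2 (by positivity)
  exact mul_pos (inv_pos.2 this) (Real.exp_pos _)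

lemma gauss_le (m v x : ℝ) (hv : 0 < v) : gauss m v x ≤ (Real.sqrt (2 * Real.pi * v))⁻¹ := by
  have h1 : Real.exp (-(x - m) ^ 2 / (2 * v)) ≤ 1 := by
    apply Real.exp_le_one_iff.2
    apply div_nonpos_of_nonpos_of_nonneg (neg_nonpos.2 (sq_nonneg _)) (by positivity)
  calc gauss m v x ≤ (Real.sqrt (2 * Real.pi * v))⁻¹ * 1 := by
        apply mul_le_mul_of_nonneg_left h1 (by positivity)
    _ = _ := mul_one _

lemma hasDerivAt_gauss (m v x : ℝ) (hv : 0 < v) :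
    HasDerivAt (gauss m v) (-(x - m) / v * gauss m v x) x := by
  have h1 : HasDerivAt (fun x : ℝ => -(x - m) ^ 2 / (2 * v)) (-(x - m) / v) x := by
    have : HasDerivAt (fun x : ℝ => x - m) 1 x := (hasDerivAt_id x).sub_const m
    have h2 := (this.pow 2).neg.div_const (2 * v)
    refine h2.congr_deriv ?_
    field_simp; ring
  have h3 := (h1.exp).const_mul (Real.sqrt (2 * Real.pi * v))⁻¹
  refine h3.congr_deriv ?_
  unfold gauss; ring

lemma continuous_gauss_m (v x : ℝ) : Continuous (fun m => gauss m v x) := by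
  unfold gauss
  fun_prop

/-- for a compactly supported probability measure `μ` on `ℝ` and
`ᾱ ∈ (0,1)`, the smoothed density `p` is positive and differentiable everywhere, and
its score satisfies
`p'(x)/p(x) = −x/(1−ᾱ) + (√ᾱ/(1−ᾱ)) · (∫ y · gauss(√ᾱy, 1−ᾱ, x) dμ(y)) / p(x)`. -/
theorem score_of_smoothed_density
    (μ : Measure ℝ) [IsProbabilityMeasure μ]
    (hsupp : ∃ s : Set ℝ, IsCompact s ∧ μ sᶜ = 0)
    (α : ℝ) (hα0 : 0 < α) (hα1 : α < 1) (x : ℝ) :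
    0 < smoothedDensity μ α x ∧
      DifferentiableAt ℝ (smoothedDensity μ α) x ∧
      deriv (smoothedDensity μ α) x / smoothedDensity μ α x =
        -x / (1 - α) + (Real.sqrt α / (1 - α)) *
          (∫ y, y * gauss (Real.sqrt α * y) (1 - α) x ∂μ) / smoothedDensity μ α x := by
  obtain ⟨s, hs, hμs⟩ := hsupp
  set v : ℝ := 1 - α with hvdef
  have hv : 0 < v := by simp [hvdef]; linarith
  set c : ℝ := (Real.sqrt (2 * Real.pi * v))⁻¹ with hcdef
  have hc : 0 < c := by
    have : 0 < Real.sqrt (2 * Real.pi * v) := Real.sqrt_pos.2 (by positivity)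
    exact inv_pos.2 this
  obtain ⟨M, hM⟩ : ∃ M, ∀ y ∈ s, |y| ≤ M := by
    obtain ⟨M, hM⟩ := hs.isBounded.exists_norm_le
    exact ⟨M, fun y hy => hM y hy⟩
  have hM0 : 0 ≤ M := by
    rcases s.eq_empty_or_nonempty with h | ⟨y, hy⟩
    · exfalso
      have h1 : μ Set.univ = 0 := by rw [← Set.compl_empty, ← h]; exact hμs
      rw [measure_univ] at h1
      simp at h1
    · exact le_trans (abs_nonneg y) (hM y hy)
  have haes : ∀ᵐ y ∂μ, y ∈ s := by
    rw [ae_iff]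
    exact hμs
  -- measurability / integrability of the main integrand
  have hcont : ∀ x' : ℝ, Continuous (fun y => gauss (Real.sqrt α * y) v x') := by
    intro x'
    exact (continuous_gauss_m v x').comp (continuous_const.mul continuous_id)
  have hint : ∀ x' : ℝ, Integrable (fun y => gauss (Real.sqrt α * y) v x') μ := by
    intro x'
    apply Integrable.mono' (integrable_const c) (hcont x').aestronglyMeasurable
    filter_upwards with y
    rw [Real.norm_eq_abs, abs_of_pos (gauss_pos _ _ _ hv)]
    exact gauss_le _ _ _ hv
  -- positivity
  have hpos : 0 < smoothedDensity μ α x := by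
    rw [smoothedDensity]
    rw [integral_pos_iff_support_of_nonneg
      (fun y => le_of_lt (gauss_pos _ _ _ hv)) (hint x)]
    have : Function.support (fun y => gauss (Real.sqrt α * y) v x) = Set.univ := by
      ext y; simp [Function.mem_support, ne_of_gt (gauss_pos _ _ _ hv)]
    rw [this]
    simp
  -- differentiation under the integral
  set F' : ℝ → ℝ → ℝ := fun x' y =>
    -(x' - Real.sqrt α * y) / v * gauss (Real.sqrt α * y) v x' with hF'def
  have hbound : ∀ᵐ y ∂μ, ∀ x' ∈ Metric.ball x 1, ‖F' x' y‖ ≤ (|x| + 1 + Real.sqrt α * M) / v * c := by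
    filter_upwards [haes] with y hy x' hx'
    have hgle : gauss (Real.sqrt α * y) v x' ≤ c := gauss_le _ _ _ hv
    have hgpos := gauss_pos (Real.sqrt α * y) v x' hv
    rw [hF'def, Real.norm_eq_abs, abs_mul, abs_div, abs_neg, abs_of_pos hv, abs_of_pos hgpos]
    have h1 : |x' - Real.sqrt α * y| ≤ |x| + 1 + Real.sqrt α * M := by
      have h2 : |x'| ≤ |x| + 1 := by
        have := Metric.mem_ball.1 hx'
        rw [Real.dist_eq] at this
        have := abs_sub_abs_le_abs_sub x' x
        linarith
      have h3 : |Real.sqrt α * y| ≤ Real.sqrt α * M := by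
        rw [abs_mul, abs_of_nonneg (Real.sqrt_nonneg α)]
        exact mul_le_mul_of_nonneg_left (hM y hy) (Real.sqrt_nonneg α)
      calc |x' - Real.sqrt α * y| ≤ |x'| + |Real.sqrt α * y| := abs_sub _ _
        _ ≤ |x| + 1 + Real.sqrt α * M := by linarith
    refine mul_le_mul ?_ hgle hgpos.le (by positivity)
    gcongr
  have hderiv : Integrable (F' x) μ ∧
      HasDerivAt (fun x' => ∫ y, gauss (Real.sqrt α * y) v x' ∂μ) (∫ y, F' x y ∂μ) x := by
    apply hasDerivAt_integral_of_dominated_loc_of_deriv_le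
      (bound := fun _ => (|x| + 1 + Real.sqrt α * M) / v * c) (Metric.ball_mem_nhds x one_pos)
      (Filter.Eventually.of_forall fun x' => (hcont x').aestronglyMeasurable)
      (hint x) ?_ hbound (integrable_const _) ?_
    · apply Continuous.aestronglyMeasurable
      rw [hF'def]
      have := continuous_gauss_m v x
      fun_prop
    · filter_upwards with y x' _
      exact hasDerivAt_gauss (Real.sqrt α * y) v x' hv
  obtain ⟨hF'int, hHasDeriv⟩ := hderiv
  have hdiff : DifferentiableAt ℝ (smoothedDensity μ α) x := by
    have : smoothedDensity μ α = fun x' => ∫ y, gauss (Real.sqrt α * y) v x' ∂μ := rfl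
    rw [this]
    exact hHasDeriv.differentiableAt
  refine ⟨hpos, hdiff, ?_⟩
  -- compute the derivative
  have hderiv_eq : deriv (smoothedDensity μ α) x = ∫ y, F' x y ∂μ := by
    have : smoothedDensity μ α = fun x' => ∫ y, gauss (Real.sqrt α * y) v x' ∂μ := rfl
    rw [this]
    exact hHasDeriv.deriv
  -- integrability of y * gauss
  have hintyg : Integrable (fun y => y * gauss (Real.sqrt α * y) v x) μ := by
    apply Integrable.mono' (integrable_const (M * c))
    · exact (continuous_id.mul (hcont x)).aestronglyMeasurable
    · filter_upwards [haes] with y hy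
      rw [Real.norm_eq_abs, abs_mul, abs_of_pos (gauss_pos _ _ _ hv)]
      exact mul_le_mul (hM y hy) (gauss_le _ _ _ hv) (le_of_lt (gauss_pos _ _ _ hv)) hM0
  have hsplit : ∫ y, F' x y ∂μ =
      (-x / v) * smoothedDensity μ α x +
      (Real.sqrt α / v) * ∫ y, y * gauss (Real.sqrt α * y) v x ∂μ := by
    rw [smoothedDensity, ← integral_const_mul, ← integral_const_mul, ← integral_add
      ((hint x).const_mul _) (hintyg.const_mul _)]
    congr 1
    ext y
    rw [hF'def]
    field_simp
    ring
  rw [hderiv_eq, hsplit]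
  field_simp
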